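/- arXiv:1308.3431 — 2 statements merged into one kernel-verified Lean document; each statement's English description precedes it below -/
import Mathlib

section
/- Let μ be a uniformly locally bounded local measure on ℝ, i.e. ‖μ‖_unif := sup_{t∈ℝ} |μ|((t, t+1]) < ∞. Then for every γ > 0 there exists C_γ > 0 such that for all u ∈ W^1_2(ℝ): |∫_ℝ |u(t)|² dμ(t)| ≤ γ ‖μ‖_unif ∫ |u'|² + C_γ ‖μ‖_unif ‖u‖_2². In particular, μ is an infinitesimally form-small perturbation of the Dirichlet form ∫ u'v̄'. -/
open MeasureTheory Filter Topology Set

/-- A (signed) local measure on `ℝ`, given by its Jordan decomposition: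
two mutually singular nonnegative Borel measures. -/
structure LocalMeasure where
  pos : Measure ℝ
  neg : Measure ℝ
  mutuallySingular : pos ⟂ₘ neg

namespace LocalMeasure

/-- The total variation `|μ|`. -/
noncomputable def tv (μ : LocalMeasure) : Measure ℝ := μ.pos + μ.neg

/-- Integration against the signed local measure. -/
noncomputable def integral (μ : LocalMeasure) (f : ℝ → ℝ) : ℝ :=
  (∫ x, f x ∂μ.pos) - ∫ x, f x ∂μ.neg

/-- Integration of a complex-valued function against the signed local measure. -/
noncomputable def cintegral (μ : LocalMeasure) (f : ℝ → ℂ) : ℂ :=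
  (∫ x, f x ∂μ.pos) - ∫ x, f x ∂μ.neg

/-- `‖μ‖_unif = sup_t |μ|((t,t+1])`. -/
noncomputable def munif (μ : LocalMeasure) : ENNReal := ⨆ t : ℝ, μ.tv (Set.Ioc t (t + 1))

/-- `μ` is uniformly locally bounded by `C`. -/
def UnifBounded (μ : LocalMeasure) (C : ℝ) : Prop :=
  ∀ t : ℝ, μ.tv (Set.Ioc t (t + 1)) ≤ ENNReal.ofReal C

/-- The translate `ω(· + t)`, i.e. `B ↦ ω(B + t)`. -/
noncomputable def translate (μ : LocalMeasure) (t : ℝ) : LocalMeasure where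
  pos := Measure.map (fun x => x - t) μ.pos
  neg := Measure.map (fun x => x - t) μ.neg
  mutuallySingular := by
    obtain ⟨s, hs, h1, h2⟩ := μ.mutuallySingular
    refine ⟨(fun y => y + t) ⁻¹' s, hs.preimage (measurable_add_const t), ?_, ?_⟩
    · rw [Measure.map_apply (measurable_sub_const t) (hs.preimage (measurable_add_const t))]
      convert h1 using 2
      ext x; simp
    · rw [← Set.preimage_compl,
        Measure.map_apply (measurable_sub_const t) (hs.compl.preimage (measurable_add_const t))]
      convert h2 using 2
      ext x; simp

/-- The real value `μ(B)` of the signed local measure on a Borel set `B`. -/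
noncomputable def val (μ : LocalMeasure) (B : Set ℝ) : ℝ :=
  (μ.pos B).toReal - (μ.neg B).toReal

/-- Vague convergence of a sequence of local measures. -/
def VagueTendsto (g : ℕ → LocalMeasure) (μ : LocalMeasure) : Prop :=
  ∀ f : ℝ → ℝ, Continuous f → HasCompactSupport f →
    Tendsto (fun n => (g n).integral f) atTop (𝓝 (μ.integral f))

/-- The vague topology `σ(C_c(ℝ)', C_c(ℝ))` on local measures. -/
noncomputable def vagueTopology : TopologicalSpace LocalMeasure :=
  TopologicalSpace.induced
    (fun μ => fun f : {f : ℝ → ℝ // Continuous f ∧ HasCompactSupport f} => μ.integral f.1)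
    inferInstance

end LocalMeasure

/-- Membership in the Sobolev space `W^1_2(ℝ)` (continuous representative `u`
with weak derivative `u'`). -/
def MemW12 (u u' : ℝ → ℝ) : Prop :=
  MemLp u 2 (volume : Measure ℝ) ∧ MemLp u' 2 (volume : Measure ℝ) ∧
    ∀ x y : ℝ, u y - u x = ∫ t in x..y, u' t

set_option maxHeartbeats 1000000 in
private lemma cauchy_schwarz_Ioc {f : ℝ → ℝ} {a b : ℝ} (hab : a < b)
    (hf : IntegrableOn f (Set.Ioc a b)) (hf2 : IntegrableOn (fun t => f t ^ 2) (Set.Ioc a b)) :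
    (∫ t in Set.Ioc a b, |f t|) ^ 2 ≤ (b - a) * ∫ t in Set.Ioc a b, f t ^ 2 := by
  have hm0 : (0:ℝ) < b - a := by linarith
  set m := b - a with hm
  set A := ∫ t in Set.Ioc a b, |f t| with hA
  set B := ∫ t in Set.Ioc a b, f t ^ 2 with hB
  have habs : IntegrableOn (fun t => |f t|) (Set.Ioc a b) := hf.abs
  have key : (0:ℝ) ≤ ∫ t in Set.Ioc a b, (m * |f t| - A) ^ 2 :=
    integral_nonneg fun t => sq_nonneg _
  have hexp : ∀ t : ℝ, (m * |f t| - A) ^ 2 = m ^ 2 * f t ^ 2 - (2 * m * A) * |f t| + A ^ 2 := by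
    intro t
    have h1 : |f t| ^ 2 = f t ^ 2 := sq_abs _
    nlinarith [h1]
  have hvol : (volume (Set.Ioc a b)).toReal = m := by
    rw [Real.volume_Ioc, ENNReal.toReal_ofReal hm0.le]
  have hcalc : ∫ t in Set.Ioc a b, (m * |f t| - A) ^ 2
      = m ^ 2 * B - (2 * m * A) * A + A ^ 2 * m := by
    have h1 : IntegrableOn (fun t => m ^ 2 * f t ^ 2) (Set.Ioc a b) := hf2.const_mul _
    have h2 : IntegrableOn (fun t => (2 * m * A) * |f t|) (Set.Ioc a b) := habs.const_mul _
    have h3 : IntegrableOn (fun _ : ℝ => A ^ 2) (Set.Ioc a b) :=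
      integrableOn_const measure_Ioc_lt_top.ne
    have h12 : IntegrableOn (fun t => m ^ 2 * f t ^ 2 - (2 * m * A) * |f t|) (Set.Ioc a b) :=
      h1.sub h2
    calc ∫ t in Set.Ioc a b, (m * |f t| - A) ^ 2
        = ∫ t in Set.Ioc a b, (m ^ 2 * f t ^ 2 - (2 * m * A) * |f t| + A ^ 2) := by
          simp_rw [hexp]
      _ = (∫ t in Set.Ioc a b, (m ^ 2 * f t ^ 2 - (2 * m * A) * |f t|)) +
            ∫ t in Set.Ioc a b, (A ^ 2 : ℝ) :=
          integral_add h12 h3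
      _ = m ^ 2 * B - (2 * m * A) * A + A ^ 2 * m := by
        rw [integral_sub h1 h2, integral_const_mul, integral_const_mul, setIntegral_const,
          smul_eq_mul, measureReal_def, hvol, ← hA, ← hB]
        ring
  rw [hcalc] at key
  nlinarith [key, hm0]

set_option maxHeartbeats 1000000 in
private lemma pointwise_bound {u u' : ℝ → ℝ} (h : MemW12 u u') {a b : ℝ} (hab : a < b)
    {x : ℝ} (hx : x ∈ Set.Ioc a b) :
    u x ^ 2 ≤ (2 / (b - a)) * (∫ t in Set.Ioc a b, u t ^ 2) +
      (2 * (b - a)) * ∫ t in Set.Ioc a b, u' t ^ 2 := by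
  obtain ⟨hu, hu', hftc⟩ := h
  have hm0 : (0:ℝ) < b - a := by linarith
  haveI hfin : IsFiniteMeasure ((volume : Measure ℝ).restrict (Set.Ioc a b)) :=
    ⟨by rw [Measure.restrict_apply_univ]; exact measure_Ioc_lt_top⟩
  have hu'int : IntegrableOn u' (Set.Ioc a b) := (hu'.restrict _).integrable one_le_two
  have hu2 : IntegrableOn (fun t => u t ^ 2) (Set.Ioc a b) := hu.integrable_sq.integrableOn
  have hu'2 : IntegrableOn (fun t => u' t ^ 2) (Set.Ioc a b) := hu'.integrable_sq.integrableOn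
  set S := ∫ t in Set.Ioc a b, u t ^ 2 with hS
  set B := ∫ t in Set.Ioc a b, u' t ^ 2 with hB
  have hCS : (∫ t in Set.Ioc a b, |u' t|) ^ 2 ≤ (b - a) * B :=
    cauchy_schwarz_Ioc hab hu'int hu'2
  have hpt : ∀ t ∈ Set.Ioc a b, u x ^ 2 ≤ 2 * u t ^ 2 + 2 * ((b - a) * B) := by
    intro t ht
    have hsub : Set.uIoc t x ⊆ Set.Ioc a b := by
      rw [Set.uIoc]
      exact Set.Ioc_subset_Ioc (le_inf ht.1.le hx.1.le) (sup_le ht.2 hx.2)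
    have habs : |u x - u t| ≤ ∫ s in Set.Ioc a b, |u' s| := by
      rw [hftc t x]
      calc |∫ s in t..x, u' s| ≤ ∫ s in Set.uIoc t x, |u' s| := by
            simpa [Real.norm_eq_abs] using intervalIntegral.norm_integral_le_integral_norm_uIoc
              (f := u') (a := t) (b := x) (μ := volume)
        _ ≤ ∫ s in Set.Ioc a b, |u' s| :=
            setIntegral_mono_set hu'int.abs
              (Eventually.of_forall fun s => abs_nonneg _)
              (HasSubset.Subset.eventuallyLE hsub)
    have hA0 : 0 ≤ ∫ s in Set.Ioc a b, |u' s| :=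
      integral_nonneg fun s => abs_nonneg _
    have h1 : (u x - u t) ^ 2 ≤ (b - a) * B := by
      calc (u x - u t) ^ 2 = |u x - u t| ^ 2 := (sq_abs _).symm
        _ ≤ (∫ s in Set.Ioc a b, |u' s|) ^ 2 := by
            exact pow_le_pow_left₀ (abs_nonneg _) habs 2
        _ ≤ (b - a) * B := hCS
    nlinarith [sq_nonneg (u t - (u x - u t)), h1]
  have hvol : (volume (Set.Ioc a b)).toReal = b - a := by
    rw [Real.volume_Ioc, ENNReal.toReal_ofReal hm0.le]
  have hintineq : (b - a) * u x ^ 2 ≤ 2 * S + (b - a) * (2 * ((b - a) * B)) := by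
    have hconst : IntegrableOn (fun _ : ℝ => u x ^ 2) (Set.Ioc a b) :=
      integrableOn_const measure_Ioc_lt_top.ne
    have hconst2 : IntegrableOn (fun _ : ℝ => 2 * ((b - a) * B)) (Set.Ioc a b) :=
      integrableOn_const measure_Ioc_lt_top.ne
    have hrhs : IntegrableOn (fun t => 2 * u t ^ 2 + 2 * ((b - a) * B)) (Set.Ioc a b) :=
      (hu2.const_mul 2).add hconst2
    have hmono := setIntegral_mono_on hconst hrhs measurableSet_Ioc hpt
    rw [setIntegral_const, smul_eq_mul, measureReal_def, hvol] at hmono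
    have hsplit : ∫ t in Set.Ioc a b, (2 * u t ^ 2 + 2 * ((b - a) * B))
        = 2 * S + (b - a) * (2 * ((b - a) * B)) := by
      rw [integral_add (hu2.const_mul 2) hconst2, integral_const_mul, setIntegral_const,
        smul_eq_mul, measureReal_def, hvol, ← hS]
    rw [hsplit] at hmono
    exact hmono
  have hdiv : u x ^ 2 ≤ (2 * S + (b - a) * (2 * ((b - a) * B))) / (b - a) :=
    (le_div_iff₀ hm0).mpr (by linarith [hintineq])
  calc u x ^ 2 ≤ (2 * S + (b - a) * (2 * ((b - a) * B))) / (b - a) := hdiv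
    _ = (2 / (b - a)) * S + (2 * (b - a)) * B := by field_simp

set_option maxHeartbeats 1000000 in
/-- A uniformly locally bounded local measure is an infinitesimally form small
perturbation of the Dirichlet form. -/
theorem localMeasure_form_small (μ : LocalMeasure) (hμ : μ.munif ≠ ⊤) :
    ∀ γ : ℝ, 0 < γ → ∃ C : ℝ, 0 < C ∧
      ∀ (u u' : ℝ → ℝ), MemW12 u u' →
        |μ.integral (fun t => u t ^ 2)| ≤
          γ * (μ.munif).toReal * (∫ x, u' x ^ 2) +
            C * (μ.munif).toReal * ∫ x, u x ^ 2 := by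
  intro γ hγ
  set ℓ := min (γ / 2) 1 with hℓdef
  have hℓ0 : 0 < ℓ := lt_min (by linarith) one_pos
  have hℓ1 : ℓ ≤ 1 := min_le_right _ _
  have hℓγ : 2 * ℓ ≤ γ := by
    have := min_le_left (γ / 2) 1
    have : ℓ ≤ γ / 2 := this
    linarith
  refine ⟨2 / ℓ, by positivity, ?_⟩
  intro u u' h
  set M := μ.munif.toReal with hMdef
  have hM0 : 0 ≤ M := ENNReal.toReal_nonneg
  have hMb : ∀ t : ℝ, μ.tv (Set.Ioc t (t + 1)) ≤ ENNReal.ofReal M := by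
    intro t
    rw [hMdef, ENNReal.ofReal_toReal hμ]
    exact le_iSup (fun t => μ.tv (Set.Ioc t (t + 1))) t
  -- the partition
  set I : ℤ → Set ℝ := fun n => Set.Ioc ((n : ℝ) * ℓ) (((n : ℝ) + 1) * ℓ) with hI
  have hIunion : ⋃ n : ℤ, I n = Set.univ := by
    have h0 := iUnion_Ioc_zsmul hℓ0
    simp only [zsmul_eq_mul] at h0
    rw [← h0]
    apply Set.iUnion_congr
    intro n
    rw [hI]
    push_cast
    ring_nf
  have hdisj : Pairwise (Function.onFun Disjoint I) := by
    intro m n hmn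
    simp only [Function.onFun, hI]
    rw [Set.Ioc_disjoint_Ioc]
    rcases lt_or_gt_of_ne hmn with hlt | hlt
    · have hcast : ((m : ℝ) + 1) ≤ (n : ℝ) := by exact_mod_cast hlt
      calc min (((m : ℝ) + 1) * ℓ) (((n : ℝ) + 1) * ℓ) ≤ ((m : ℝ) + 1) * ℓ := min_le_left _ _
        _ ≤ (n : ℝ) * ℓ := by nlinarith
        _ ≤ max ((m : ℝ) * ℓ) ((n : ℝ) * ℓ) := le_max_right _ _
    · have hcast : ((n : ℝ) + 1) ≤ (m : ℝ) := by exact_mod_cast hlt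
      calc min (((m : ℝ) + 1) * ℓ) (((n : ℝ) + 1) * ℓ) ≤ ((n : ℝ) + 1) * ℓ := min_le_right _ _
        _ ≤ (m : ℝ) * ℓ := by nlinarith
        _ ≤ max ((m : ℝ) * ℓ) ((n : ℝ) * ℓ) := le_max_left _ _
  have htv : ∀ n : ℤ, μ.tv (I n) ≤ ENNReal.ofReal M := by
    intro n
    refine le_trans (measure_mono ?_) (hMb ((n : ℝ) * ℓ))
    rw [hI]
    exact Set.Ioc_subset_Ioc_right (by nlinarith)
  -- integrability
  have hu2 : Integrable (fun t => u t ^ 2) (volume : Measure ℝ) := h.1.integrable_sq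
  have hu'2 : Integrable (fun t => u' t ^ 2) (volume : Measure ℝ) := h.2.1.integrable_sq
  have hS0 : 0 ≤ ∫ x, u x ^ 2 := integral_nonneg fun x => sq_nonneg _
  have hB0 : 0 ≤ ∫ x, u' x ^ 2 := integral_nonneg fun x => sq_nonneg _
  -- local bounds
  set bn : ℤ → ℝ := fun n =>
    (2 / ℓ) * (∫ t in I n, u t ^ 2) + (2 * ℓ) * ∫ t in I n, u' t ^ 2 with hbn
  have hbn0 : ∀ n, 0 ≤ bn n := by
    intro n
    have h1 : 0 ≤ ∫ t in I n, u t ^ 2 := integral_nonneg fun x => sq_nonneg _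
    have h2 : 0 ≤ ∫ t in I n, u' t ^ 2 := integral_nonneg fun x => sq_nonneg _
    have := hℓ0
    positivity
  have hbnd : ∀ n : ℤ, ∀ x ∈ I n, u x ^ 2 ≤ bn n := by
    intro n x hx
    have hab : (n : ℝ) * ℓ < ((n : ℝ) + 1) * ℓ := by nlinarith
    have h1 := pointwise_bound h hab hx
    have h2 : ((n : ℝ) + 1) * ℓ - (n : ℝ) * ℓ = ℓ := by ring
    rw [h2] at h1
    exact h1
  -- the key lintegral estimate
  set L : ENNReal := ∫⁻ x, ENNReal.ofReal (u x ^ 2) ∂μ.tv with hL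
  set R0 : ℝ := (2 / ℓ) * (∫ x, u x ^ 2) + (2 * ℓ) * ∫ x, u' x ^ 2 with hR0
  have hR00 : 0 ≤ R0 := by positivity
  have hLbound : L ≤ ENNReal.ofReal (R0 * M) := by
    have hstep1 : L = ∑' n : ℤ, ∫⁻ x in I n, ENNReal.ofReal (u x ^ 2) ∂μ.tv := by
      rw [hL, ← setLIntegral_univ, ← hIunion,
        lintegral_iUnion (fun n => measurableSet_Ioc) hdisj]
    have hstep2 : ∀ n : ℤ, ∫⁻ x in I n, ENNReal.ofReal (u x ^ 2) ∂μ.tv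
        ≤ ENNReal.ofReal (bn n) * ENNReal.ofReal M := by
      intro n
      calc ∫⁻ x in I n, ENNReal.ofReal (u x ^ 2) ∂μ.tv
          ≤ ∫⁻ _ in I n, ENNReal.ofReal (bn n) ∂μ.tv :=
            setLIntegral_mono' measurableSet_Ioc
              (fun x hx => ENNReal.ofReal_le_ofReal (hbnd n x hx))
        _ = ENNReal.ofReal (bn n) * μ.tv (I n) := setLIntegral_const _ _
        _ ≤ ENNReal.ofReal (bn n) * ENNReal.ofReal M :=
            mul_le_mul_right (htv n) _
    have hofbn : ∀ n : ℤ, ENNReal.ofReal (bn n)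
        = ENNReal.ofReal (2 / ℓ) * (∫⁻ x in I n, ENNReal.ofReal (u x ^ 2)) +
          ENNReal.ofReal (2 * ℓ) * ∫⁻ x in I n, ENNReal.ofReal (u' x ^ 2) := by
      intro n
      have h1 : 0 ≤ ∫ t in I n, u t ^ 2 := integral_nonneg fun x => sq_nonneg _
      have h2 : 0 ≤ ∫ t in I n, u' t ^ 2 := integral_nonneg fun x => sq_nonneg _
      rw [hbn]
      rw [ENNReal.ofReal_add (by positivity) (by positivity),
        ENNReal.ofReal_mul (p := 2 / ℓ) (by positivity),
        ENNReal.ofReal_mul (p := 2 * ℓ) (by positivity),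
        ofReal_integral_eq_lintegral_ofReal hu2.integrableOn
          (Filter.Eventually.of_forall fun x => sq_nonneg _),
        ofReal_integral_eq_lintegral_ofReal hu'2.integrableOn
          (Filter.Eventually.of_forall fun x => sq_nonneg _)]
    have hsum : ∑' n : ℤ, ENNReal.ofReal (bn n) = ENNReal.ofReal R0 := by
      calc ∑' n : ℤ, ENNReal.ofReal (bn n)
          = ENNReal.ofReal (2 / ℓ) * (∑' n : ℤ, ∫⁻ x in I n, ENNReal.ofReal (u x ^ 2)) +
            ENNReal.ofReal (2 * ℓ) * ∑' n : ℤ, ∫⁻ x in I n, ENNReal.ofReal (u' x ^ 2) := by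
            simp_rw [hofbn]
            rw [ENNReal.tsum_add, ENNReal.tsum_mul_left, ENNReal.tsum_mul_left]
        _ = ENNReal.ofReal (2 / ℓ) * (∫⁻ x, ENNReal.ofReal (u x ^ 2)) +
            ENNReal.ofReal (2 * ℓ) * ∫⁻ x, ENNReal.ofReal (u' x ^ 2) := by
            rw [← lintegral_iUnion (fun n => measurableSet_Ioc) hdisj,
              ← lintegral_iUnion (fun n => measurableSet_Ioc) hdisj, hIunion,
              setLIntegral_univ, setLIntegral_univ]
        _ = ENNReal.ofReal R0 := by
            rw [hR0, ENNReal.ofReal_add (by positivity) (by positivity),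
              ENNReal.ofReal_mul (p := 2 / ℓ) (by positivity),
              ENNReal.ofReal_mul (p := 2 * ℓ) (by positivity),
              ofReal_integral_eq_lintegral_ofReal hu2
                (Filter.Eventually.of_forall fun x => sq_nonneg _),
              ofReal_integral_eq_lintegral_ofReal hu'2
                (Filter.Eventually.of_forall fun x => sq_nonneg _)]
    calc L = ∑' n : ℤ, ∫⁻ x in I n, ENNReal.ofReal (u x ^ 2) ∂μ.tv := hstep1
      _ ≤ ∑' n : ℤ, ENNReal.ofReal (bn n) * ENNReal.ofReal M :=
          ENNReal.tsum_le_tsum hstep2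
      _ = (∑' n : ℤ, ENNReal.ofReal (bn n)) * ENNReal.ofReal M := ENNReal.tsum_mul_right
      _ = ENNReal.ofReal R0 * ENNReal.ofReal M := by rw [hsum]
      _ = ENNReal.ofReal (R0 * M) := (ENNReal.ofReal_mul hR00).symm
  -- from lintegral bound to the Bochner integral bound
  have hLtop : L ≠ ⊤ := by
    exact ne_top_of_le_ne_top ENNReal.ofReal_ne_top hLbound
  have hsplitL : (∫⁻ x, ENNReal.ofReal (u x ^ 2) ∂μ.pos) +
      (∫⁻ x, ENNReal.ofReal (u x ^ 2) ∂μ.neg) = L := by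
    rw [hL, LocalMeasure.tv, lintegral_add_measure]
  have hpos_top : (∫⁻ x, ENNReal.ofReal (u x ^ 2) ∂μ.pos) ≠ ⊤ := by
    refine ne_top_of_le_ne_top hLtop ?_
    rw [← hsplitL]; exact le_self_add
  have hneg_top : (∫⁻ x, ENNReal.ofReal (u x ^ 2) ∂μ.neg) ≠ ⊤ := by
    refine ne_top_of_le_ne_top hLtop ?_
    rw [← hsplitL]; exact le_add_self
  have habs : |μ.integral (fun t => u t ^ 2)| ≤ L.toReal := by
    rw [LocalMeasure.integral]
    have h1 := norm_integral_le_lintegral_norm (μ := μ.pos) (fun t : ℝ => u t ^ 2)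
    have h2 := norm_integral_le_lintegral_norm (μ := μ.neg) (fun t : ℝ => u t ^ 2)
    simp only [Real.norm_eq_abs, abs_sq] at h1 h2
    have h3 : |(∫ x, u x ^ 2 ∂μ.pos) - ∫ x, u x ^ 2 ∂μ.neg|
        ≤ |∫ x, u x ^ 2 ∂μ.pos| + |∫ x, u x ^ 2 ∂μ.neg| := abs_sub _ _
    have h4 : (∫⁻ x, ENNReal.ofReal (u x ^ 2) ∂μ.pos).toReal +
        (∫⁻ x, ENNReal.ofReal (u x ^ 2) ∂μ.neg).toReal = L.toReal := by
      rw [← ENNReal.toReal_add hpos_top hneg_top, hsplitL]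
    linarith [h1, h2, h3, h4.le]
  have hLR : L.toReal ≤ R0 * M := by
    have := ENNReal.toReal_mono ENNReal.ofReal_ne_top hLbound
    rwa [ENNReal.toReal_ofReal (by positivity)] at this
  have hfinal : R0 * M ≤ γ * M * (∫ x, u' x ^ 2) + (2 / ℓ) * M * ∫ x, u x ^ 2 := by
    rw [hR0]
    have key : (γ - 2 * ℓ) * (M * ∫ x, u' x ^ 2) ≥ 0 :=
      mul_nonneg (by linarith) (mul_nonneg hM0 hB0)
    nlinarith [key]
  calc |μ.integral (fun t => u t ^ 2)| ≤ L.toReal := habs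
    _ ≤ R0 * M := hLR
    _ ≤ γ * M * (∫ x, u' x ^ 2) + (2 / ℓ) * M * ∫ x, u x ^ 2 := hfinal
end

section
/- Let Ω be a set of local measures on ℝ, uniformly bounded in the norm ‖μ‖_unif = sup_t |μ|((t,t+1]), closed in the vague topology, and translation invariant. Then the translation action α: ℝ × Ω → Ω, α_t(ω) = ω(·+t), is jointly continuous: if t_n → t in ℝ and ω_n → ω vaguely in Ω, then α_{t_n}(ω_n) → α_t(ω) vaguely. -/
open MeasureTheory Filter Topology Set

namespace LocalMeasure

lemma tv_Ioc_nat_le (μ : LocalMeasure) {C : ℝ} (h : μ.UnifBounded C) (a : ℝ) (N : ℕ) :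
    μ.tv (Set.Ioc a (a + N)) ≤ N * ENNReal.ofReal C := by
  induction N with
  | zero => simp
  | succ n ih =>
    have h1 : a ≤ a + (n : ℝ) := by simp [Nat.cast_nonneg]
    have h2 : a + (n : ℝ) ≤ a + ((n : ℕ) + 1 : ℕ) := by push_cast; linarith
    have key : Set.Ioc a (a + ((n + 1 : ℕ) : ℝ)) =
        Set.Ioc a (a + n) ∪ Set.Ioc (a + n) (a + ((n + 1 : ℕ) : ℝ)) := by
      rw [Set.Ioc_union_Ioc_eq_Ioc h1 (by push_cast; linarith)]
    rw [key]
    have h3 : a + ((n + 1 : ℕ) : ℝ) = (a + n) + 1 := by push_cast; ring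
    calc μ.tv (Set.Ioc a (a + n) ∪ Set.Ioc (a + n) (a + ((n + 1 : ℕ) : ℝ)))
        ≤ μ.tv (Set.Ioc a (a + n)) + μ.tv (Set.Ioc (a + n) (a + ((n + 1 : ℕ) : ℝ))) :=
          measure_union_le _ _
      _ ≤ n * ENNReal.ofReal C + ENNReal.ofReal C := by
          refine add_le_add ih ?_
          rw [h3]; exact h (a + n)
      _ = (n + 1 : ℕ) * ENNReal.ofReal C := by push_cast; ring

lemma tv_fmoc (μ : LocalMeasure) {C : ℝ} (h : μ.UnifBounded C) :
    IsFiniteMeasureOnCompacts μ.tv := by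
  constructor
  intro K hK
  obtain ⟨b1, b2, hb⟩ := bddBelow_bddAbove_iff_subset_Icc.mp ⟨hK.bddBelow, hK.bddAbove⟩
  set N := ⌈b2 - (b1 - 1)⌉₊ with hN
  have hsub : K ⊆ Set.Ioc (b1 - 1) ((b1 - 1) + N) := by
    refine hb.trans ?_
    intro x hx
    have hceil : b2 - (b1 - 1) ≤ (N : ℝ) := Nat.le_ceil _
    exact ⟨by linarith [hx.1], by linarith [hx.2]⟩
  calc μ.tv K ≤ μ.tv (Set.Ioc (b1 - 1) ((b1 - 1) + N)) := measure_mono hsub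
    _ ≤ N * ENNReal.ofReal C := μ.tv_Ioc_nat_le h _ _
    _ < ⊤ := ENNReal.mul_lt_top (by simp) ENNReal.ofReal_lt_top

lemma pos_le_tv (μ : LocalMeasure) (s : Set ℝ) : μ.pos s ≤ μ.tv s := by
  rw [tv, Measure.add_apply]; exact le_self_add

lemma neg_le_tv (μ : LocalMeasure) (s : Set ℝ) : μ.neg s ≤ μ.tv s := by
  rw [tv, Measure.add_apply]; exact le_add_self

lemma pos_fmoc (μ : LocalMeasure) {C : ℝ} (h : μ.UnifBounded C) :
    IsFiniteMeasureOnCompacts μ.pos := by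
  have := μ.tv_fmoc h
  exact ⟨fun K hK => lt_of_le_of_lt (μ.pos_le_tv K) (hK.measure_lt_top)⟩

lemma neg_fmoc (μ : LocalMeasure) {C : ℝ} (h : μ.UnifBounded C) :
    IsFiniteMeasureOnCompacts μ.neg := by
  have := μ.tv_fmoc h
  exact ⟨fun K hK => lt_of_le_of_lt (μ.neg_le_tv K) (hK.measure_lt_top)⟩

lemma integral_translate (μ : LocalMeasure) (s : ℝ) {f : ℝ → ℝ} (hf : Continuous f) :
    (μ.translate s).integral f = μ.integral (fun x => f (x - s)) := by
  unfold translate integral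
  simp only
  rw [integral_map (measurable_sub_const s).aemeasurable hf.aestronglyMeasurable,
    integral_map (measurable_sub_const s).aemeasurable hf.aestronglyMeasurable]

lemma integral_sub' (μ : LocalMeasure) {C : ℝ} (hUB : μ.UnifBounded C) {g h : ℝ → ℝ}
    (hg : Continuous g) (hgs : HasCompactSupport g)
    (hh : Continuous h) (hhs : HasCompactSupport h) :
    μ.integral (fun x => g x - h x) = μ.integral g - μ.integral h := by
  haveI := μ.pos_fmoc hUB
  haveI := μ.neg_fmoc hUB
  unfold integral
  rw [integral_sub (hg.integrable_of_hasCompactSupport hgs) (hh.integrable_of_hasCompactSupport hhs),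
    integral_sub (hg.integrable_of_hasCompactSupport hgs) (hh.integrable_of_hasCompactSupport hhs)]
  ring

lemma abs_integral_le (μ : LocalMeasure) {C : ℝ} (hUB : μ.UnifBounded C) {g : ℝ → ℝ}
    (hg : Continuous g) (a : ℝ) (N : ℕ)
    (hsupp : ∀ x, x ∉ Set.Ioc a (a + N) → g x = 0) {M : ℝ}
    (hM : ∀ x, |g x| ≤ M) :
    |μ.integral g| ≤ 2 * (M * (N * max C 0)) := by
  have hCC : ENNReal.ofReal C = ENNReal.ofReal (max C 0) := by
    rcases le_or_gt C 0 with hc | hc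
    · rw [ENNReal.ofReal_eq_zero.mpr hc, max_eq_right hc, ENNReal.ofReal_zero]
    · rw [max_eq_left hc.le]
  have htv : μ.tv (Set.Ioc a (a + N)) ≤ N * ENNReal.ofReal (max C 0) := by
    rw [← hCC]; exact μ.tv_Ioc_nat_le hUB a N
  have hfin : (N : ENNReal) * ENNReal.ofReal (max C 0) ≠ ⊤ :=
    (ENNReal.mul_lt_top (by simp) ENNReal.ofReal_lt_top).ne
  have key : ∀ ν : Measure ℝ, ν (Set.Ioc a (a + N)) ≤ μ.tv (Set.Ioc a (a + N)) →
      |∫ x, g x ∂ν| ≤ M * (N * max C 0) := by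
    intro ν hν
    have hνfin : ν (Set.Ioc a (a + N)) < ⊤ :=
      lt_of_le_of_lt (hν.trans htv) hfin.lt_top
    rw [← setIntegral_eq_integral_of_forall_compl_eq_zero hsupp (μ := ν)]
    have := norm_setIntegral_le_of_norm_le_const (f := g) (μ := ν) hνfin
      (C := M) (fun x _ => by rw [Real.norm_eq_abs]; exact hM x)
    rw [Real.norm_eq_abs] at this
    refine this.trans ?_
    have hM0 : 0 ≤ M := le_trans (abs_nonneg _) (hM 0)
    refine mul_le_mul_of_nonneg_left ?_ hM0
    have h2 : (ν (Set.Ioc a (a + N))).toReal ≤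
        ((N : ENNReal) * ENNReal.ofReal (max C 0)).toReal :=
      ENNReal.toReal_mono hfin (hν.trans htv)
    refine h2.trans ?_
    rw [ENNReal.toReal_mul, ENNReal.toReal_ofReal (le_max_right C 0)]
    simp
  unfold integral
  calc |(∫ x, g x ∂μ.pos) - ∫ x, g x ∂μ.neg|
      ≤ |∫ x, g x ∂μ.pos| + |∫ x, g x ∂μ.neg| := abs_sub _ _
    _ ≤ M * (N * max C 0) + M * (N * max C 0) :=
        add_le_add (key _ (μ.pos_le_tv _)) (key _ (μ.neg_le_tv _))
    _ = 2 * (M * (N * max C 0)) := by ring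

end LocalMeasure

/-- Joint continuity of the translation action on a bounded, vaguely closed,
translation invariant set of local measures: if `t_n → t` and `ω_n → ω` vaguely,
then `α_{t_n}(ω_n) → α_t(ω)` vaguely. -/
theorem translation_action_continuous (C : ℝ) (Ω : Set LocalMeasure)
    (hbd : ∀ μ ∈ Ω, LocalMeasure.UnifBounded μ C)
    (hcl : ∀ (g : ℕ → LocalMeasure), (∀ n, g n ∈ Ω) → ∀ μ : LocalMeasure,
      LocalMeasure.VagueTendsto g μ → μ ∈ Ω)
    (hinv : ∀ ω ∈ Ω, ∀ t : ℝ, ω.translate t ∈ Ω)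
    (tn : ℕ → ℝ) (t : ℝ) (htn : Filter.Tendsto tn Filter.atTop (nhds t))
    (ωn : ℕ → LocalMeasure) (hωn : ∀ n, ωn n ∈ Ω) (ω : LocalMeasure) (hω : ω ∈ Ω)
    (hconv : LocalMeasure.VagueTendsto ωn ω) :
    LocalMeasure.VagueTendsto (fun n => (ωn n).translate (tn n)) (ω.translate t) := by
  intro f hf hfs
  -- rewrite translates as integrals of shifted functions
  have hrw : ∀ (μ : LocalMeasure) (s : ℝ),
      (μ.translate s).integral f = μ.integral (fun x => f (x - s)) :=
    fun μ s => μ.integral_translate s hf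
  simp only [hrw]
  -- the shifted functions
  have hFc : ∀ s : ℝ, Continuous (fun x => f (x - s)) :=
    fun s => hf.comp (continuous_sub_right s)
  have hFs : ∀ s : ℝ, HasCompactSupport (fun x => f (x - s)) := by
    intro s
    exact hfs.comp_homeomorph (Homeomorph.subRight s)
  -- fixed window containing all relevant supports
  obtain ⟨b1, b2, hb⟩ := bddBelow_bddAbove_iff_subset_Icc.mp
    ⟨hfs.isCompact.bddBelow, hfs.isCompact.bddAbove⟩
  set a : ℝ := b1 + t - 2 with ha
  set N : ℕ := ⌈b2 - b1 + 3⌉₊ with hN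
  have hNge : b2 - b1 + 3 ≤ (N : ℝ) := Nat.le_ceil _
  have hsupp : ∀ s : ℝ, |s - t| ≤ 1 → ∀ x, x ∉ Set.Ioc a (a + N) → f (x - s) = 0 := by
    intro s hs x hx
    by_contra hne
    have hmem : x - s ∈ tsupport f := subset_tsupport f hne
    have h1 := (hb hmem).1
    have h2 := (hb hmem).2
    have habs := abs_le.mp hs
    apply hx
    constructor
    · simp only [ha]; linarith
    · simp only [ha]; linarith
  -- uniform continuity
  have hu : UniformContinuous f := hfs.uniformContinuous_of_continuous hf
  rw [Metric.tendsto_atTop]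
  intro ε hε
  set D : ℝ := (N : ℝ) * max C 0 with hD
  have hD0 : 0 ≤ D := mul_nonneg (Nat.cast_nonneg N) (le_max_right C 0)
  set ε' : ℝ := ε / (8 * (D + 1)) with hε'
  have hε'0 : 0 < ε' := by positivity
  obtain ⟨δ, hδ0, hδ⟩ := Metric.uniformContinuous_iff.mp hu ε' hε'0
  -- eventually bounds
  have hA : ∀ᶠ n in atTop, dist (tn n) t < min δ 1 :=
    (Metric.tendsto_nhds.mp htn) _ (lt_min hδ0 one_pos)
  have hB : ∀ᶠ n in atTop, dist ((ωn n).integral (fun x => f (x - t)))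
      (ω.integral (fun x => f (x - t))) < ε / 2 :=
    Metric.tendsto_nhds.mp (hconv _ (hFc t) (hFs t)) _ (by positivity)
  obtain ⟨n0, hn0⟩ := ((hA.and hB).exists_forall_of_atTop)
  refine ⟨n0, fun n hn => ?_⟩
  obtain ⟨hA', hB'⟩ := hn0 n hn
  have hUBn := hbd _ (hωn n)
  -- first term estimate
  have hgdef : ∀ x : ℝ, |f (x - tn n) - f (x - t)| ≤ ε' := by
    intro x
    have hd : dist (x - tn n) (x - t) < δ := by
      rw [Real.dist_eq]
      have := lt_of_lt_of_le hA' (min_le_left δ 1)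
      rw [Real.dist_eq] at this
      calc |x - tn n - (x - t)| = |t - tn n| := by ring_nf
        _ = |tn n - t| := abs_sub_comm _ _
        _ < δ := this
    have := hδ hd
    rw [Real.dist_eq] at this
    exact this.le
  have hsuppn : ∀ x, x ∉ Set.Ioc a (a + N) → f (x - tn n) - f (x - t) = 0 := by
    intro x hx
    have h1 : |tn n - t| ≤ 1 := by
      have := lt_of_lt_of_le hA' (min_le_right δ 1)
      rw [Real.dist_eq] at this; exact this.le
    rw [hsupp (tn n) h1 x hx, hsupp t (by simp) x hx, sub_zero]
  have hAbound : |(ωn n).integral (fun x => f (x - tn n) - f (x - t))| ≤ 2 * (ε' * D) :=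
    (ωn n).abs_integral_le hUBn ((hFc (tn n)).sub (hFc t)) a N hsuppn hgdef
  have hAsmall : 2 * (ε' * D) < ε / 2 := by
    have h8 : (0:ℝ) < 8 * (D + 1) := by linarith
    have heq : 2 * (ε' * D) = ε * D * 2 / (8 * (D + 1)) := by rw [hε']; ring
    rw [heq, div_lt_div_iff₀ h8 two_pos]
    nlinarith [mul_nonneg hε.le hD0]
  have hsplit : (ωn n).integral (fun x => f (x - tn n)) - (ωn n).integral (fun x => f (x - t))
      = (ωn n).integral (fun x => f (x - tn n) - f (x - t)) :=
    ((ωn n).integral_sub' hUBn (hFc (tn n)) (hFs (tn n)) (hFc t) (hFs t)).symm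
  calc dist ((ωn n).integral (fun x => f (x - tn n))) (ω.integral (fun x => f (x - t)))
      ≤ dist ((ωn n).integral (fun x => f (x - tn n))) ((ωn n).integral (fun x => f (x - t)))
        + dist ((ωn n).integral (fun x => f (x - t))) (ω.integral (fun x => f (x - t))) :=
        dist_triangle _ _ _
    _ < ε / 2 + ε / 2 := by
        apply add_lt_add_of_le_of_lt _ hB'
        rw [Real.dist_eq, hsplit]
        exact hAbound.trans hAsmall.le
    _ = ε := by ring
end
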